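/- Let S, I be positive C¹ functions on [0,∞) with Ṡ = -βεSI, İ = βεSI - γI, where ε(t) = max(1 + (ηβ/c)I(t), 0), β, γ, c > 0, η < 0. If S is weakly decreasing, lim_{t→∞} I(t) = 0, and lim_{t→∞} ε(t) = 1, then S∞ := lim_{t→∞} S(t) satisfies S∞ ≤ γ/β; i.e., if there existed δ > 0 with S(t) ≥ γ/β + δ for all t, then I(t) would grow exponentially beyond some time, contradicting I(t) → 0. -/

import Mathlib

/-- In the SIR model with equilibrium distancing, if S is weakly decreasing,
I(t) → 0 and ε(t) → 1, then Sinf = lim S(t) satisfies Sinf ≤ γ/β. -/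
theorem stmt9 (β γ c η : ℝ) (hβ : 0 < β) (hγ : 0 < γ) (hc : 0 < c) (hη : η < 0)
    (S I : ℝ → ℝ) (hS : ContDiff ℝ 1 S) (hI : ContDiff ℝ 1 I)
    (hSpos : ∀ t, 0 ≤ t → 0 < S t) (hIpos : ∀ t, 0 ≤ t → 0 < I t)
    (hS' : ∀ t, 0 ≤ t →
      deriv S t = -(β * max (1 + (η * β / c) * I t) 0 * S t * I t))
    (hI' : ∀ t, 0 ≤ t →
      deriv I t = β * max (1 + (η * β / c) * I t) 0 * S t * I t - γ * I t)
    (hSmono : AntitoneOn S (Set.Ici (0 : ℝ)))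
    (hIlim : Filter.Tendsto I Filter.atTop (nhds 0))
    (hεlim : Filter.Tendsto (fun t => max (1 + (η * β / c) * I t) 0)
      Filter.atTop (nhds 1))
    (Sinf : ℝ) (hlim : Filter.Tendsto S Filter.atTop (nhds Sinf)) :
    Sinf ≤ γ / β := by
  by_contra hcon
  push_neg at hcon
  have hSinf_pos : 0 < Sinf := lt_trans (div_pos hγ hβ) hcon
  have hγlt : γ < β * Sinf := by
    rw [div_lt_iff₀ hβ] at hcon; linarith [hcon]
  set δ : ℝ := (β * Sinf - γ) / 2 with hδdef
  have hδ : 0 < δ := by rw [hδdef]; linarith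
  -- S t ≥ Sinf for t ≥ 0
  have hSge : ∀ t, 0 ≤ t → Sinf ≤ S t := by
    intro t ht
    refine le_of_tendsto hlim ?_
    filter_upwards [Filter.eventually_ge_atTop t] with s hs
    exact hSmono ht (le_trans ht hs) hs
  -- eventually ε ≥ 1 - δ/(β*Sinf)
  have hεev : ∀ᶠ t in Filter.atTop,
      1 - δ / (β * Sinf) ≤ max (1 + (η * β / c) * I t) 0 := by
    refine hεlim.eventually (eventually_ge_nhds ?_)
    have : 0 < δ / (β * Sinf) := by positivity
    linarith
  obtain ⟨T, hT⟩ := Filter.eventually_atTop.mp hεev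
  set T' : ℝ := max T 0 with hT'def
  have hT'0 : (0:ℝ) ≤ T' := le_max_right _ _
  -- deriv I positive on (T', ∞)
  have hderivpos : ∀ t ∈ interior (Set.Ici T'), 0 < deriv I t := by
    intro t ht
    rw [interior_Ici] at ht
    have ht0 : 0 ≤ t := le_trans hT'0 (le_of_lt ht)
    have htT : T ≤ t := le_trans (le_max_left _ _) (le_of_lt ht)
    have hε : 1 - δ / (β * Sinf) ≤ max (1 + (η * β / c) * I t) 0 := hT t htT
    have hI0 : 0 < I t := hIpos t ht0
    rw [hI' t ht0]
    have h1 : β * max (1 + (η * β / c) * I t) 0 * S t ≥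
        β * (1 - δ / (β * Sinf)) * Sinf := by
      have hε0 : 0 ≤ max (1 + (η * β / c) * I t) 0 := le_max_right _ _
      have hS1 : Sinf ≤ S t := hSge t ht0
      have h2 : (0:ℝ) ≤ 1 - δ / (β * Sinf) := by
        rw [sub_nonneg, div_le_one (by positivity)]
        rw [hδdef]; linarith
      have a1 : (1 - δ / (β * Sinf)) * (β * Sinf) ≤
          max (1 + (η * β / c) * I t) 0 * (β * Sinf) :=
        mul_le_mul_of_nonneg_right hε (by positivity)
      have a2 : β * max (1 + (η * β / c) * I t) 0 * Sinf ≤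
          β * max (1 + (η * β / c) * I t) 0 * S t :=
        mul_le_mul_of_nonneg_left hS1 (by positivity)
      nlinarith [a1, a2]
    have h3 : β * (1 - δ / (β * Sinf)) * Sinf = β * Sinf - δ := by
      field_simp
    have h4 : γ < β * max (1 + (η * β / c) * I t) 0 * S t := by
      rw [h3] at h1
      have : β * Sinf - δ = γ + δ := by rw [hδdef]; ring
      linarith
    nlinarith
  have hmono : StrictMonoOn I (Set.Ici T') :=
    strictMonoOn_of_deriv_pos (convex_Ici T') hI.continuous.continuousOn hderivpos
  have hIge : ∀ᶠ t in Filter.atTop, I T' ≤ I t := by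
    filter_upwards [Filter.eventually_gt_atTop T'] with t ht
    exact le_of_lt (hmono (Set.self_mem_Ici) (le_of_lt ht) ht)
  have : I T' ≤ 0 := ge_of_tendsto hIlim hIge
  exact absurd this (not_le.mpr (hIpos T' hT'0))
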